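/- For T > 0 and 0 ≤ j ≤ N, the kernel G_j satisfies the moment conditions ∫₀^T G_j(T,σ)·σ^k dσ = (-1)^j · j! · δ_{jk} for all 0 ≤ k ≤ N, where δ is the Kronecker delta and G_j(T,σ) = ((N+j+1)!/(T^{j+1}·j!·(N-j)!))·Σ_{m=0}^{N} ((-1)^m·(N+m+1)!/((j+m+1)·(N-m)!·(m!)²))·(σ/T)^m. -/

import Mathlib

open Polynomial Finset

lemma altA (N : ℕ) (p : ℝ[X]) (hp : p.degree < N) :
    ∑ m ∈ range (N + 1), (-1 : ℝ) ^ m * (N.choose m) * p.eval (m : ℝ) = 0 := by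
  induction N generalizing p with
  | zero =>
    have hp0 : p = 0 := by
      rw [← Polynomial.degree_eq_bot]
      exact Nat.WithBot.lt_zero_iff.mp (by simpa using hp)
    simp [hp0]
  | succ n ih =>
    by_cases h0 : p = 0
    · simp [h0]
    set q : ℝ[X] := p - p.comp (X + C 1) with hq
    have hlc : p.leadingCoeff = (p.comp (X + C 1)).leadingCoeff := by
      rw [Polynomial.leadingCoeff_comp (by rw [Polynomial.natDegree_X_add_C]; exact one_ne_zero),
        Polynomial.leadingCoeff_X_add_C, one_pow, mul_one]
    have hc0 : p.comp (X + C 1) ≠ 0 := by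
      rw [← Polynomial.leadingCoeff_ne_zero, ← hlc, Polynomial.leadingCoeff_ne_zero]
      exact h0
    have hdc : (p.comp (X + C 1)).degree = p.degree := by
      rw [Polynomial.degree_eq_natDegree h0, Polynomial.degree_eq_natDegree hc0,
        Polynomial.natDegree_comp, Polynomial.natDegree_X_add_C, mul_one]
    have hqd : q.degree < p.degree := Polynomial.degree_sub_lt hdc.symm h0 hlc
    have hpn : p.degree ≤ (n : WithBot ℕ) := by
      have h1 : p.natDegree < n + 1 := (Polynomial.natDegree_lt_iff_degree_lt h0).mpr hp
      calc p.degree ≤ (p.natDegree : WithBot ℕ) := Polynomial.degree_le_natDegree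
        _ ≤ (n : WithBot ℕ) := by exact_mod_cast Nat.lt_succ_iff.mp h1
    have IH := ih q (lt_of_lt_of_le hqd hpn)
    have hqe : ∀ m : ℝ, q.eval m = p.eval m - p.eval (m + 1) := by
      intro m; simp [hq]
    have key : ∑ m ∈ range (n + 2), (-1 : ℝ) ^ m * ((n+1).choose m) * p.eval (m : ℝ)
        = ∑ m ∈ range (n + 1), (-1 : ℝ) ^ m * (n.choose m) * q.eval (m : ℝ) := by
      have expand : ∀ m ∈ range (n+1), (-1 : ℝ) ^ m * (n.choose m) * q.eval (m : ℝ)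
          = (-1 : ℝ) ^ m * (n.choose m) * p.eval (m : ℝ)
            - (-1 : ℝ) ^ m * (n.choose m) * p.eval ((m : ℝ) + 1) := by
        intro m _; rw [hqe]; ring
      rw [Finset.sum_congr rfl expand, Finset.sum_sub_distrib]
      rw [Finset.sum_range_succ' (fun m => (-1 : ℝ) ^ m * ((n+1).choose m) * p.eval (m : ℝ))]
      have pascal : ∀ m ∈ range (n+1), (-1 : ℝ) ^ (m+1) * (((n+1).choose (m+1) : ℕ) : ℝ) * p.eval ((m:ℝ) + 1)
          = -((-1 : ℝ) ^ m * (n.choose m) * p.eval ((m:ℝ)+1))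
            + (-1 : ℝ) ^ (m+1) * (n.choose (m+1)) * p.eval ((m:ℝ)+1) := by
        intro m _
        rw [Nat.choose_succ_succ]
        push_cast
        ring
      have h1 : ∑ m ∈ range (n+1), (-1:ℝ)^(m+1) * (n.choose (m+1)) * p.eval ((m:ℝ)+1)
          = ∑ m ∈ range (n+1), (-1:ℝ)^m * (n.choose m) * p.eval (m:ℝ) - p.eval 0 := by
        rw [Finset.sum_range_succ' (fun m => (-1:ℝ)^m * (n.choose m) * p.eval (m:ℝ))]
        push_cast
        rw [Finset.sum_range_succ]
        simp [Nat.choose_succ_self]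
      calc (∑ m ∈ range (n+1), (-1 : ℝ) ^ (m+1) * ((n+1).choose (m+1)) * p.eval ((m+1 : ℕ) : ℝ))
            + (-1:ℝ)^0 * ((n+1).choose 0) * p.eval ((0:ℕ):ℝ)
          = (∑ m ∈ range (n+1), (-((-1 : ℝ) ^ m * (n.choose m) * p.eval ((m:ℝ)+1))
              + (-1 : ℝ) ^ (m+1) * (n.choose (m+1)) * p.eval ((m:ℝ)+1)))
            + p.eval 0 := by
            refine congrArg₂ (· + ·) (Finset.sum_congr rfl fun m hm => ?_) (by simp)
            have := pascal m hm
            push_cast at this ⊢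
            linarith [this]
        _ = (∑ m ∈ range (n+1), (-1:ℝ)^m * (n.choose m) * p.eval (m:ℝ))
            - ∑ m ∈ range (n+1), (-1:ℝ)^m * (n.choose m) * p.eval ((m:ℝ)+1) := by
            rw [Finset.sum_add_distrib, h1, Finset.sum_neg_distrib]
            ring
    rw [key, IH]

lemma pascalSum (n : ℕ) (f : ℕ → ℝ) :
    ∑ m ∈ range (n + 2), (-1 : ℝ) ^ m * ((n+1).choose m) * f m
      = ∑ m ∈ range (n + 1), (-1 : ℝ) ^ m * (n.choose m) * (f m - f (m+1)) := by
  rw [Finset.sum_range_succ' (fun m => (-1 : ℝ) ^ m * ((n+1).choose m) * f m)]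
  have step : ∀ m ∈ range (n+1), (-1 : ℝ) ^ (m+1) * (((n+1).choose (m+1) : ℕ) : ℝ) * f (m+1)
      = -((-1:ℝ)^m * (n.choose m) * f (m+1)) + (-1:ℝ)^(m+1) * (n.choose (m+1)) * f (m+1) := by
    intro m _
    rw [Nat.choose_succ_succ]
    push_cast
    ring
  rw [Finset.sum_congr rfl step, Finset.sum_add_distrib]
  have h1 : (∑ m ∈ range (n+1), (-1:ℝ)^(m+1) * (n.choose (m+1)) * f (m+1))
      + (-1:ℝ)^0 * (((n+1).choose 0 : ℕ) : ℝ) * f 0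
      = ∑ m ∈ range (n+1), (-1:ℝ)^m * (n.choose m) * f m := by
    rw [Finset.sum_range_succ (fun m => (-1:ℝ)^(m+1) * (n.choose (m+1)) * f (m+1)) n]
    rw [Finset.sum_range_succ' (fun m => (-1:ℝ)^m * (n.choose m) * f m) n]
    simp [Nat.choose_succ_self]
  rw [add_assoc, h1, Finset.sum_neg_distrib]
  have expand : ∀ m ∈ range (n+1), (-1:ℝ)^m * (n.choose m) * (f m - f (m+1))
      = (-1:ℝ)^m * (n.choose m) * f m - (-1:ℝ)^m * (n.choose m) * f (m+1) := by
    intro m _; ring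
  rw [Finset.sum_congr rfl expand, Finset.sum_sub_distrib]
  ring

lemma altB (N : ℕ) (x : ℝ) (hx : 0 < x) :
    ∑ m ∈ range (N + 1), (-1 : ℝ) ^ m * (N.choose m) / (x + m)
      = (N.factorial : ℝ) / ∏ i ∈ range (N + 1), (x + i) := by
  induction N generalizing x with
  | zero => simp
  | succ n ih =>
    have key := pascalSum n (fun m => 1 / (x + m))
    have lhs_eq : ∑ m ∈ range (n + 1 + 1), (-1 : ℝ) ^ m * ((n+1).choose m) / (x + m)
        = ∑ m ∈ range (n + 2), (-1 : ℝ) ^ m * ((n+1).choose m) * (1 / (x + m)) := by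
      refine Finset.sum_congr rfl fun m _ => by ring
    have split : ∀ m ∈ range (n+1), (-1:ℝ)^m * (n.choose m) * (1/(x + m) - 1/(x + ((m+1:ℕ):ℝ)))
        = (-1:ℝ)^m * (n.choose m) / (x + m) - (-1:ℝ)^m * (n.choose m) / ((x+1) + m) := by
      intro m _
      push_cast
      ring
    rw [lhs_eq, key, Finset.sum_congr rfl split, Finset.sum_sub_distrib,
      ih x hx, ih (x+1) (by linarith)]
    set P := ∏ i ∈ range (n+1), (x + i) with hP
    set Q := ∏ i ∈ range (n+1), (x + 1 + i) with hQ
    have hPpos : 0 < P := Finset.prod_pos fun i _ => by positivity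
    have hQpos : 0 < Q := Finset.prod_pos fun i _ => by positivity
    have e2 : ∏ i ∈ range (n+1+1), (x + i) = P * (x + ((n:ℝ)+1)) := by
      rw [Finset.prod_range_succ]; push_cast; ring
    have e1 : ∏ i ∈ range (n+1+1), (x + i) = Q * x := by
      rw [Finset.prod_range_succ']
      have congr1 : ∀ i ∈ range (n+1), (x + ((i+1 : ℕ) : ℝ)) = (x + 1 + i) := by
        intro i _; push_cast; ring
      rw [Finset.prod_congr rfl congr1]
      simp [hQ]
    have hx1 : (0:ℝ) < x + ((n:ℝ)+1) := by positivity
    have hQx : Q * x = P * (x + ((n:ℝ)+1)) := by rw [← e1, e2]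
    have d1 : (n.factorial:ℝ)/P = ((n.factorial:ℝ) * (x+((n:ℝ)+1)))/(P*(x+((n:ℝ)+1))) :=
      (mul_div_mul_right _ _ (ne_of_gt hx1)).symm
    have d2 : (n.factorial:ℝ)/Q = ((n.factorial:ℝ) * x)/(Q * x) :=
      (mul_div_mul_right _ _ (ne_of_gt hx)).symm
    rw [e2, d1, d2, hQx, div_sub_div_same]
    congr 1
    rw [Nat.factorial_succ]
    push_cast
    ring

-- helper1
lemma prodAsc (c n : ℕ) : ∏ i ∈ range n, ((c:ℝ) + 1 + i) = ((c+n).factorial : ℝ) / (c.factorial : ℝ) := by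
  induction n with
  | zero =>
    have hc : (c.factorial : ℝ) ≠ 0 := by positivity
    simp [div_self hc]
  | succ n ih =>
    rw [Finset.prod_range_succ, ih]
    have h1 : ((c + (n+1)).factorial : ℝ) = ((c+n).factorial : ℝ) * ((c:ℝ) + 1 + n) := by
      have h2 : c + (n+1) = (c + n) + 1 := by ring
      rw [h2, Nat.factorial_succ]
      push_cast; ring
    rw [h1]
    have hc : (c.factorial : ℝ) ≠ 0 := by positivity
    field_simp

-- helper2
lemma prodNegFall (j : ℕ) : ∏ i ∈ range j, ((i:ℝ) - ((j:ℕ):ℝ)) = (-1:ℝ)^j * (j.factorial : ℝ) := by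
  induction j with
  | zero => simp
  | succ j ih =>
    rw [Finset.prod_range_succ' (fun i => (i:ℝ) - (((j+1:ℕ)):ℝ))]
    have congr1 : ∀ i ∈ range j, ((((i+1:ℕ)):ℝ) - ((j+1:ℕ):ℝ)) = ((i:ℝ) - (j:ℝ)) := by
      intro i _; push_cast; ring
    rw [Finset.prod_congr rfl congr1, ih]
    rw [Nat.factorial_succ]
    push_cast
    ring

-- helper3
lemma prodRise (j n : ℕ) : ∏ t ∈ range n, (((j:ℝ) + 1 + t) - (j:ℝ)) = (n.factorial : ℝ) := by
  induction n with
  | zero => simp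
  | succ n ih =>
    rw [Finset.prod_range_succ, ih, Nat.factorial_succ]
    push_cast; ring

lemma altC (N j : ℕ) (hj : j ≤ N) (q : ℝ[X]) (hq : q.degree ≤ N) :
    ∑ m ∈ range (N+1), (-1:ℝ)^m * (N.choose m) * q.eval (m:ℝ) / ((j:ℝ) + m + 1)
      = q.eval (-((j:ℝ)+1)) * (N.factorial : ℝ) * (j.factorial : ℝ) / ((N+j+1).factorial : ℝ) := by
  set a : ℝ := -((j:ℝ)+1) with ha
  set s : ℝ[X] := q /ₘ (X - C a) with hs
  have hmonic : (X - C a).Monic := monic_X_sub_C a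
  have hdecomp : q = C (q.eval a) + (X - C a) * s := by
    conv_lhs => rw [← Polynomial.modByMonic_add_div q (X - C a)]
    rw [Polynomial.modByMonic_X_sub_C_eq_C_eval]
  have hsdeg : s.degree < (N : WithBot ℕ) := by
    by_cases h0 : q = 0
    · rw [hs, h0, Polynomial.zero_divByMonic]
      exact lt_of_le_of_lt bot_le (by exact_mod_cast WithBot.bot_lt_coe N)
    · exact lt_of_lt_of_le (Polynomial.degree_divByMonic_lt q (X - C a) h0 (by
        rw [Polynomial.degree_X_sub_C]; exact zero_lt_one)) hq
  have heval : ∀ m : ℕ, q.eval (m:ℝ) = q.eval a + ((j:ℝ) + m + 1) * s.eval (m:ℝ) := by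
    intro m
    conv_lhs => rw [hdecomp]
    rw [Polynomial.eval_add, Polynomial.eval_C, Polynomial.eval_mul, Polynomial.eval_sub,
      Polynomial.eval_X, Polynomial.eval_C, ha]
    ring
  have hden : ∀ m : ℕ, ((j:ℝ) + m + 1) ≠ 0 := by
    intro m; positivity
  have termeq : ∀ m ∈ range (N+1), (-1:ℝ)^m * (N.choose m) * q.eval (m:ℝ) / ((j:ℝ) + m + 1)
      = (-1:ℝ)^m * (N.choose m) * s.eval (m:ℝ)
        + q.eval a * ((-1:ℝ)^m * (N.choose m) / (((j:ℝ)+1) + m)) := by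
    intro m _
    rw [heval m]
    have h := hden m
    field_simp
    ring
  rw [Finset.sum_congr rfl termeq, Finset.sum_add_distrib, altA N s hsdeg, zero_add,
    ← Finset.mul_sum, altB N ((j:ℝ)+1) (by positivity)]
  have hprod : ∏ i ∈ range (N+1), ((j:ℝ) + 1 + i) = ((j+(N+1)).factorial : ℝ) / (j.factorial : ℝ) :=
    prodAsc j (N+1)
  rw [hprod]
  have hnj : j+(N+1) = N+j+1 := by omega
  rw [hnj]
  have h2 : ((N+j+1).factorial : ℝ) ≠ 0 := by positivity
  have h3 : (j.factorial : ℝ) ≠ 0 := by positivity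
  field_simp

lemma altD (N j k : ℕ) (hj : j ≤ N) (hk : k ≤ N) :
    ∑ m ∈ range (N+1), (-1:ℝ)^m * ((N+m+1).factorial : ℝ) /
        (((j:ℝ)+m+1) * ((N-m).factorial : ℝ) * ((m.factorial : ℝ))^2 * ((k:ℝ)+m+1))
      = if j = k then (-1:ℝ)^j * ((j.factorial : ℝ))^2 * ((N-j).factorial : ℝ) / ((N+j+1).factorial : ℝ)
        else 0 := by
  set q : ℝ[X] := ∏ i ∈ (range (N+1)).erase k, (X + C ((i:ℝ)+1)) with hqdef
  have hkmem : k ∈ range (N+1) := Finset.mem_range.mpr (Nat.lt_succ_of_le hk)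
  have hcard : ((range (N+1)).erase k).card = N := by
    rw [Finset.card_erase_of_mem hkmem, Finset.card_range]
    omega
  have hqdeg : q.degree ≤ (N : WithBot ℕ) := by
    have h1 : q.natDegree = N := by
      have hne : ∀ i ∈ (range (N+1)).erase k, (X + C ((i:ℝ)+1)) ≠ 0 :=
        fun i _ => Polynomial.X_add_C_ne_zero _
      rw [hqdef, Polynomial.natDegree_prod _ _ hne]
      have hdeg1 : ∀ i ∈ (range (N+1)).erase k, (X + C ((i:ℝ)+1)).natDegree = 1 :=
        fun i _ => Polynomial.natDegree_X_add_C _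
      rw [Finset.sum_congr rfl hdeg1, Finset.sum_const, hcard, smul_eq_mul, mul_one]
    calc q.degree ≤ (q.natDegree : WithBot ℕ) := Polynomial.degree_le_natDegree
      _ = (N : WithBot ℕ) := by rw [h1]
  have evalm : ∀ m : ℕ, q.eval (m:ℝ) * ((k:ℝ)+m+1) = ((N+m+1).factorial : ℝ) / (m.factorial : ℝ) := by
    intro m
    have he : q.eval (m:ℝ) = ∏ i ∈ (range (N+1)).erase k, ((m:ℝ) + ((i:ℝ)+1)) := by
      rw [hqdef, Polynomial.eval_prod]; simp
    have hins : ((m:ℝ) + ((k:ℝ)+1)) * ∏ i ∈ (range (N+1)).erase k, ((m:ℝ) + ((i:ℝ)+1))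
        = ∏ i ∈ range (N+1), ((m:ℝ) + ((i:ℝ)+1)) :=
      Finset.mul_prod_erase (range (N+1)) (fun i => (m:ℝ) + ((i:ℝ)+1)) hkmem
    have hall : ∏ i ∈ range (N+1), ((m:ℝ) + ((i:ℝ)+1)) = ((m+(N+1)).factorial : ℝ) / (m.factorial : ℝ) := by
      rw [← prodAsc m (N+1)]
      exact Finset.prod_congr rfl fun i _ => by ring
    have hmn : m + (N+1) = N+m+1 := by omega
    rw [he]
    calc (∏ i ∈ (range (N+1)).erase k, ((m:ℝ) + ((i:ℝ)+1))) * ((k:ℝ)+m+1)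
        = ((m:ℝ) + ((k:ℝ)+1)) * ∏ i ∈ (range (N+1)).erase k, ((m:ℝ) + ((i:ℝ)+1)) := by ring
      _ = ((m+(N+1)).factorial : ℝ) / (m.factorial : ℝ) := by rw [hins, hall]
      _ = ((N+m+1).factorial : ℝ) / (m.factorial : ℝ) := by rw [hmn]
  have evala : q.eval (-((j:ℝ)+1))
      = if j = k then (-1:ℝ)^j * (j.factorial : ℝ) * ((N-j).factorial : ℝ) else 0 := by
    have he : q.eval (-((j:ℝ)+1)) = ∏ i ∈ (range (N+1)).erase k, ((i:ℝ) - (j:ℝ)) := by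
      rw [hqdef, Polynomial.eval_prod]
      refine Finset.prod_congr rfl fun i _ => by simp; ring
    rw [he]
    by_cases hjk : j = k
    · subst hjk
      rw [if_pos rfl]
      have hset : (range (N+1)).erase j = range j ∪ Ico (j+1) (N+1) := by
        ext x
        simp only [Finset.mem_erase, Finset.mem_range, Finset.mem_union, Finset.mem_Ico]
        omega
      have hdisj : Disjoint (range j) (Ico (j+1) (N+1)) := by
        rw [Finset.disjoint_left]
        intro x hx hx'
        simp only [Finset.mem_range] at hx
        simp only [Finset.mem_Ico] at hx'
        omega
      rw [hset, Finset.prod_union hdisj, prodNegFall j]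
      have hico : ∏ i ∈ Ico (j+1) (N+1), ((i:ℝ) - (j:ℝ)) = ((N-j).factorial : ℝ) := by
        rw [Finset.prod_Ico_eq_prod_range]
        have hc : ∀ t ∈ range (N+1-(j+1)), (((j+1+t : ℕ)):ℝ) - (j:ℝ) = (((j:ℝ)+1+t) - (j:ℝ)) := by
          intro t _; push_cast; ring
        rw [Finset.prod_congr rfl hc, prodRise j (N+1-(j+1))]
        have h9 : N+1-(j+1) = N-j := by omega
        rw [h9]
      rw [hico]
    · rw [if_neg hjk]
      refine Finset.prod_eq_zero (Finset.mem_erase.mpr ⟨hjk, Finset.mem_range.mpr (Nat.lt_succ_of_le hj)⟩) ?_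
      simp
  -- termwise rewrite
  have hNfac : (N.factorial : ℝ) ≠ 0 := by positivity
  have termeq : ∀ m ∈ range (N+1), (-1:ℝ)^m * ((N+m+1).factorial : ℝ) /
        (((j:ℝ)+m+1) * ((N-m).factorial : ℝ) * ((m.factorial : ℝ))^2 * ((k:ℝ)+m+1))
      = ((1:ℝ)/(N.factorial : ℝ)) * ((-1:ℝ)^m * (N.choose m) * q.eval (m:ℝ) / ((j:ℝ) + m + 1)) := by
    intro m hm
    have hmN : m ≤ N := Nat.lt_succ_iff.mp (Finset.mem_range.mp hm)
    have hkm : ((k:ℝ)+m+1) ≠ 0 := by positivity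
    have hjm : ((j:ℝ)+m+1) ≠ 0 := by positivity
    have hmfac : (m.factorial : ℝ) ≠ 0 := by positivity
    have hNmfac : ((N-m).factorial : ℝ) ≠ 0 := by positivity
    have e1 : q.eval (m:ℝ) = ((N+m+1).factorial : ℝ) / ((m.factorial : ℝ) * ((k:ℝ)+m+1)) := by
      rw [eq_div_iff (by positivity), ← mul_assoc]
      calc q.eval (m:ℝ) * (m.factorial : ℝ) * ((k:ℝ)+m+1)
          = (q.eval (m:ℝ) * ((k:ℝ)+m+1)) * (m.factorial : ℝ) := by ring
        _ = ((N+m+1).factorial : ℝ) / (m.factorial : ℝ) * (m.factorial : ℝ) := by rw [evalm m]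
        _ = ((N+m+1).factorial : ℝ) := by field_simp
    have e2 : ((N.choose m : ℕ) : ℝ) = (N.factorial : ℝ) / ((m.factorial : ℝ) * ((N-m).factorial : ℝ)) := by
      rw [eq_div_iff (by positivity)]
      have := (Nat.choose_mul_factorial_mul_factorial hmN)
      have h10 : ((N.choose m * m.factorial * (N-m).factorial : ℕ) : ℝ) = (N.factorial : ℝ) := by
        exact_mod_cast congrArg (Nat.cast : ℕ → ℝ) this
      push_cast at h10
      linarith [h10]
    rw [e1, e2]
    field_simp
  rw [Finset.sum_congr rfl termeq, ← Finset.mul_sum, altC N j hj q hqdeg, evala]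
  by_cases hjk : j = k
  · rw [if_pos hjk, if_pos hjk]
    field_simp
  · rw [if_neg hjk, if_neg hjk]
    simp

theorem stmt19 (N j k : ℕ) (hj : j ≤ N) (hk : k ≤ N) (T : ℝ) (hT : 0 < T) :
    ∫ σ in (0:ℝ)..T,
        (((N + j + 1).factorial : ℝ) / (T ^ (j + 1) * j.factorial * (N - j).factorial)) *
          (∑ m ∈ Finset.range (N + 1),
            ((-1 : ℝ) ^ m * ((N + m + 1).factorial : ℝ) /
                ((j + m + 1) * ((N - m).factorial : ℝ) * (m.factorial : ℝ) ^ 2)) *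
              (σ / T) ^ m) * σ ^ k =
      (-1 : ℝ) ^ j * j.factorial * (if j = k then 1 else 0) := by
  have hT' : T ≠ 0 := ne_of_gt hT
  set C : ℝ := ((N + j + 1).factorial : ℝ) / (T ^ (j + 1) * j.factorial * (N - j).factorial) with hC
  set a : ℕ → ℝ := fun m => (-1 : ℝ) ^ m * ((N + m + 1).factorial : ℝ) /
      (((j:ℝ) + m + 1) * ((N - m).factorial : ℝ) * (m.factorial : ℝ) ^ 2) with ha
  set b : ℕ → ℝ := fun m => C * a m / T ^ m with hb
  have step1 : (∫ σ in (0:ℝ)..T, C * (∑ m ∈ Finset.range (N + 1), a m * (σ / T) ^ m) * σ ^ k)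
      = ∫ σ in (0:ℝ)..T, ∑ m ∈ Finset.range (N + 1), b m * σ ^ (m + k) := by
    apply intervalIntegral.integral_congr
    intro σ _
    simp only
    rw [Finset.mul_sum, Finset.sum_mul]
    refine Finset.sum_congr rfl fun m _ => ?_
    rw [hb, div_pow, pow_add]
    field_simp
  have step2 : (∫ σ in (0:ℝ)..T, ∑ m ∈ Finset.range (N + 1), b m * σ ^ (m + k))
      = ∑ m ∈ Finset.range (N + 1), b m * (T ^ (m + k + 1) / ((m:ℝ) + k + 1)) := by
    rw [intervalIntegral.integral_finset_sum (f := fun m σ => b m * σ ^ (m + k)) (fun m _ =>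
      ((continuous_const.mul (continuous_pow (m+k))).intervalIntegrable 0 T))]
    refine Finset.sum_congr rfl fun m _ => ?_
    rw [intervalIntegral.integral_const_mul, integral_pow]
    rw [zero_pow (by omega : m + k + 1 ≠ 0)]
    push_cast
    ring
  have step3 : ∑ m ∈ Finset.range (N + 1), b m * (T ^ (m + k + 1) / ((m:ℝ) + k + 1))
      = C * T^(k+1) * ∑ m ∈ Finset.range (N+1), (-1:ℝ)^m * ((N+m+1).factorial : ℝ) /
          (((j:ℝ)+m+1) * ((N-m).factorial : ℝ) * ((m.factorial : ℝ))^2 * ((k:ℝ)+m+1)) := by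
    rw [Finset.mul_sum]
    refine Finset.sum_congr rfl fun m _ => ?_
    rw [hb, ha]
    simp only
    have h1 : ((j:ℝ) + m + 1) ≠ 0 := by positivity
    have h2 : ((k:ℝ) + m + 1) ≠ 0 := by positivity
    have h3 : ((m:ℝ) + k + 1) ≠ 0 := by positivity
    have h4 : ((N-m).factorial : ℝ) ≠ 0 := by positivity
    have h5 : (m.factorial : ℝ) ≠ 0 := by positivity
    have h6 : (T:ℝ)^m ≠ 0 := pow_ne_zero _ hT'
    have hpow : T ^ (m + k + 1) = T^m * T^(k+1) := by rw [← pow_add, Nat.add_assoc]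
    rw [hpow]
    field_simp
    ring
  rw [step1, step2, step3, altD N j k hj hk]
  by_cases hjk : j = k
  · rw [if_pos hjk, if_pos hjk, hC, ← hjk]
    have h7 : (j.factorial : ℝ) ≠ 0 := by positivity
    have h8 : ((N-j).factorial : ℝ) ≠ 0 := by positivity
    have h9 : ((N+j+1).factorial : ℝ) ≠ 0 := by positivity
    have h10 : T^(j+1) ≠ 0 := pow_ne_zero _ hT'
    field_simp
  · rw [if_neg hjk, if_neg hjk]
    ring
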